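/- arXiv:1312.5074 — 2 statements merged into one kernel-verified Lean document; each statement's English description precedes it below -/
import Mathlib

section
/- Let I be a finite set, and let G be a group acting on subsets of I × G by g · B = {(s, gx) : (s,x) ∈ B}. There is an order-preserving bijection between G-labeled set partitions of I (pairs of blocks (B, orbit of f : B → G under left G-translation), ordered by the induced refinement-type order) and partitions of I × G on whose blocks G acts freely, ordered by refinement; the bijection sends the labeled partition X to the partition of I × G with blocks {g · β_{B,f} : g ∈ G, (B, f̃) ∈ X} where β_{B,f} = {(b, f(b)) : b ∈ B}. -/
open Finset
open scoped Classical

/-- A `G`-labeled set partition of the finite set `I`: a partition of `I` into nonempty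
blocks, each block `B` labeled by an orbit of maps `B → G` under pointwise left
translation by `G`. -/
structure GLabeledPartition (I : Type) [Fintype I] [DecidableEq I]
    (G : Type) [Group G] where
  blocks : Finset (Finset I)
  nonempty_blocks : ∀ B ∈ blocks, B.Nonempty
  exists_unique_block : ∀ x : I, ∃! B, B ∈ blocks ∧ x ∈ B
  label : (B : Finset I) → B ∈ blocks → MulAction.orbitRel.Quotient G ({ x // x ∈ B } → G)

/-- Restriction of a `G`-orbit of maps `B → G` to a subset `A ⊆ B`; this is
well defined on orbits. -/
def restrictLabel {I : Type} {G : Type} [Group G] {A B : Finset I} (h : A ⊆ B) :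
    MulAction.orbitRel.Quotient G ({ x // x ∈ B } → G) →
      MulAction.orbitRel.Quotient G ({ x // x ∈ A } → G) :=
  Quotient.map' (fun f a => f ⟨a.1, h a.2⟩) (by
    rintro f g ⟨c, rfl⟩
    exact ⟨c, rfl⟩)

/-- The refinement-type order on `G`-labeled set partitions: each block of `Y` is a
(disjoint) union of blocks of `X`, and the label of each block of `X` is the
restriction of the label of the block of `Y` containing it. -/
def LPle {I : Type} [Fintype I] [DecidableEq I] {G : Type} [Group G]
    (X Y : GLabeledPartition I G) : Prop :=
  (∀ A ∈ X.blocks, ∃ B ∈ Y.blocks, A ⊆ B) ∧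
  ∀ (B : Finset I) (hB : B ∈ Y.blocks) (A : Finset I) (hA : A ∈ X.blocks) (hAB : A ⊆ B),
    X.label A hA = restrictLabel hAB (Y.label B hB)

/-- `Λ` is a partition of the type `α` (as a set of sets). -/
def IsSetPartition {α : Type*} (Λ : Set (Set α)) : Prop :=
  (∀ C ∈ Λ, C.Nonempty) ∧ ∀ p : α, ∃! C, C ∈ Λ ∧ p ∈ C

/-- The partition `Λ` of `I × G` is invariant under the action `g · (s,x) = (s, gx)`,
so that `G` acts on its set of blocks. -/
def GInvariant {I : Type} {G : Type} [Group G] (Λ : Set (Set (I × G))) : Prop :=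
  ∀ g : G, ∀ C ∈ Λ, (fun p : I × G => (p.1, g * p.2)) '' C ∈ Λ

/-- `G` acts freely on the blocks of the partition `Λ` of `I × G`. -/
def ActsFreelyOnBlocks {I : Type} {G : Type} [Group G] (Λ : Set (Set (I × G))) : Prop :=
  ∀ C ∈ Λ, ∀ g : G, (fun p : I × G => (p.1, g * p.2)) '' C = C → g = 1

/-- Refinement order on set partitions of a type. -/
def SetRefines {α : Type*} (Λ Λ' : Set (Set α)) : Prop :=
  ∀ C ∈ Λ, ∃ C' ∈ Λ', C ⊆ C'

/-- The partition of `I × G` associated to a `G`-labeled set partition `X` of `I`: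
its blocks are the sets `g · β_{B,f} = {(b, g·f(b)) : b ∈ B}` for `(B, f̃) ∈ X`
and `g ∈ G`. -/
def toBlocks {I : Type} [Fintype I] [DecidableEq I] {G : Type} [Group G]
    (X : GLabeledPartition I G) : Set (Set (I × G)) :=
  {C | ∃ (B : Finset I) (hB : B ∈ X.blocks) (f : { x // x ∈ B } → G),
      X.label B hB = Quotient.mk'' f ∧
      ∃ g : G, C = Set.range fun b : { x // x ∈ B } => ((b : I), g * f b)}

set_option linter.unusedSectionVars false

section Aux
variable {I : Type} [Fintype I] [DecidableEq I] {G : Type} [Group G]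

def betaSet (B : Finset I) (f : {x // x ∈ B} → G) (g : G) : Set (I × G) :=
  Set.range fun b : {x // x ∈ B} => ((b : I), g * f b)

lemma mem_betaSet {B : Finset I} {f : {x // x ∈ B} → G} {g : G} {s : I} {x : G} :
    (s, x) ∈ betaSet B f g ↔ ∃ h : s ∈ B, x = g * f ⟨s, h⟩ := by
  constructor
  · rintro ⟨b, hb⟩
    obtain ⟨h1, h2⟩ := Prod.mk.injEq .. ▸ hb
    subst h1
    exact ⟨b.2, h2.symm⟩
  · rintro ⟨h, rfl⟩
    exact ⟨⟨s, h⟩, rfl⟩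

lemma fst_image_betaSet (B : Finset I) (f : {x // x ∈ B} → G) (g : G) :
    Prod.fst '' betaSet B f g = ↑B := by
  ext s
  constructor
  · rintro ⟨⟨t, x⟩, ht, rfl⟩
    exact (mem_betaSet.1 ht).1
  · intro hs
    exact ⟨(s, g * f ⟨s, hs⟩), mem_betaSet.2 ⟨hs, rfl⟩, rfl⟩

lemma shift_betaSet (B : Finset I) (f : {x // x ∈ B} → G) (g h : G) :
    (fun p : I × G => (p.1, h * p.2)) '' betaSet B f g = betaSet B f (h * g) := by
  unfold betaSet
  rw [← Set.range_comp]
  apply congrArg Set.range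
  funext b
  simp [mul_assoc]

lemma mem_toBlocks {X : GLabeledPartition I G} {C : Set (I × G)} :
    C ∈ toBlocks X ↔ ∃ (B : Finset I) (hB : B ∈ X.blocks) (f : { x // x ∈ B } → G),
      X.label B hB = Quotient.mk'' f ∧ ∃ g : G, C = betaSet B f g := Iff.rfl

lemma orbit_eq {B : Finset I} {f f' : {x // x ∈ B} → G}
    (h : (Quotient.mk'' f : MulAction.orbitRel.Quotient G ({ x // x ∈ B } → G)) = Quotient.mk'' f') :
    ∃ c : G, ∀ b, f b = c * f' b := by
  obtain ⟨c, hc⟩ := Quotient.exact' h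
  exact ⟨c, fun b => by rw [← hc]; rfl⟩

lemma orbit_eq' {B : Finset I} {f f' : {x // x ∈ B} → G} (c : G) (hc : ∀ b, f b = c * f' b) :
    (Quotient.mk'' f : MulAction.orbitRel.Quotient G ({ x // x ∈ B } → G)) = Quotient.mk'' f' :=
  Quotient.sound' ⟨c, funext fun b => (hc b).symm⟩

lemma betaSet_congr {B : Finset I} {f f' : {x // x ∈ B} → G} {g g' c : G}
    (hc : ∀ b, f b = c * f' b) (hg : g' = g * c) : betaSet B f g = betaSet B f' g' := by
  apply congrArg Set.range
  funext b
  simp [hc b, hg, mul_assoc]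

lemma toBlocks_isSetPartition (X : GLabeledPartition I G) : IsSetPartition (toBlocks X) := by
  constructor
  · rintro C ⟨B, hB, f, hf, g, rfl⟩
    obtain ⟨s, hs⟩ := X.nonempty_blocks B hB
    exact ⟨_, Set.mem_range_self (⟨s, hs⟩ : {x // x ∈ B})⟩
  · rintro ⟨s, x⟩
    obtain ⟨B, ⟨hB, hsB⟩, huniq⟩ := X.exists_unique_block s
    set f := Quotient.out (X.label B hB) with hf
    have hlab : X.label B hB = Quotient.mk'' f := (Quotient.out_eq' _).symm
    refine ⟨betaSet B f (x * (f ⟨s, hsB⟩)⁻¹),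
      ⟨⟨B, hB, f, hlab, _, rfl⟩, mem_betaSet.2 ⟨hsB, by group⟩⟩, ?_⟩
    rintro C ⟨⟨B', hB', f', hf', g', rfl⟩, hmem⟩
    obtain ⟨hsB', hx'⟩ := mem_betaSet.1 hmem
    have hBeq : B' = B := huniq B' ⟨hB', hsB'⟩
    subst hBeq
    obtain ⟨c, hc⟩ := orbit_eq (hf'.symm.trans hlab)
    refine betaSet_congr hc ?_
    -- x = g' * f' ⟨s,_⟩  and f ⟨s,_⟩ = c * f' ⟨s,_⟩; goal: x * (f ⟨s,hsB⟩)⁻¹ = g' * c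
    have := hc ⟨s, hsB⟩
    rw [hx', this]
    group

lemma toBlocks_gInvariant (X : GLabeledPartition I G) : GInvariant (toBlocks X) := by
  rintro h C ⟨B, hB, f, hf, g, rfl⟩
  exact ⟨B, hB, f, hf, h * g, shift_betaSet B f g h⟩

lemma toBlocks_free (X : GLabeledPartition I G) : ActsFreelyOnBlocks (toBlocks X) := by
  rintro C ⟨B, hB, f, hf, g, rfl⟩ h hC
  change (fun p : I × G => (p.1, h * p.2)) '' betaSet B f g = betaSet B f g at hC
  rw [shift_betaSet] at hC
  obtain ⟨s, hs⟩ := X.nonempty_blocks B hB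
  have hm : ((s : I), h * g * f ⟨s, hs⟩) ∈ betaSet B f g := hC ▸ mem_betaSet.2 ⟨hs, rfl⟩
  obtain ⟨h', hx⟩ := mem_betaSet.1 hm
  have h2 : h * g * f ⟨s, hs⟩ = g * f ⟨s, hs⟩ := by rw [hx]
  have h3 : h * g = g := mul_right_cancel h2
  have h4 : h * g = 1 * g := by rw [one_mul]; exact h3
  exact mul_right_cancel h4


lemma GLP.ext {X Y : GLabeledPartition I G} (hb : X.blocks = Y.blocks)
    (hl : ∀ B (hB : B ∈ X.blocks) (hB' : B ∈ Y.blocks), X.label B hB = Y.label B hB') :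
    X = Y := by
  obtain ⟨b1, n1, e1, l1⟩ := X
  obtain ⟨b2, n2, e2, l2⟩ := Y
  obtain rfl : b1 = b2 := hb
  simp only [GLabeledPartition.mk.injEq, heq_eq_eq, true_and]
  funext B hB
  exact hl B hB hB

lemma mem_blocks_of_toBlocks {X : GLabeledPartition I G} {B : Finset I} (hB : B ∈ X.blocks) :
    betaSet B (Quotient.out (X.label B hB)) 1 ∈ toBlocks X :=
  ⟨B, hB, _, (Quotient.out_eq' _).symm, 1, rfl⟩

lemma blocks_sub_of_toBlocks {X Y : GLabeledPartition I G} (h : toBlocks X ⊆ toBlocks Y) :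
    ∀ B ∈ X.blocks, B ∈ Y.blocks := by
  intro B hB
  obtain ⟨B', hB', f', hf', g', hEq⟩ := h (mem_blocks_of_toBlocks hB)
  have : (↑B : Set I) = ↑B' := by
    rw [← fst_image_betaSet B (Quotient.out (X.label B hB)) 1, hEq]
    exact fst_image_betaSet B' f' g'
  rwa [(by exact_mod_cast this : B = B')]

lemma mk_eq_of_betaSet {B : Finset I} {f f' : {x // x ∈ B} → G} {g g' : G}
    (hEq : betaSet B f g = betaSet B f' g') :
    (Quotient.mk'' f : MulAction.orbitRel.Quotient G ({ x // x ∈ B } → G)) = Quotient.mk'' f' := by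
  refine orbit_eq' (g⁻¹ * g') fun b => ?_
  have hm : ((b : I), g * f b) ∈ betaSet B f' g' := hEq ▸ ⟨b, rfl⟩
  obtain ⟨h, hx⟩ := mem_betaSet.1 hm
  have hb : (⟨(b : I), h⟩ : {x // x ∈ B}) = b := Subtype.ext rfl
  rw [hb] at hx
  have : g * f b = g * (g⁻¹ * g' * f' b) := by rw [hx]; group
  exact mul_left_cancel this

lemma toBlocks_injective :
    Function.Injective (toBlocks : GLabeledPartition I G → Set (Set (I × G))) := by
  intro X Y h
  have hXY := blocks_sub_of_toBlocks h.le
  have hYX := blocks_sub_of_toBlocks h.ge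
  refine GLP.ext (Finset.ext fun B => ⟨hXY B, hYX B⟩) fun B hB hB' => ?_
  obtain ⟨B', hB'', f', hf', g', hEq⟩ := h.le (mem_blocks_of_toBlocks hB)
  have hBB : B = B' := by
    have : (↑B : Set I) = ↑B' := by
      rw [← fst_image_betaSet B (Quotient.out (X.label B hB)) 1, hEq]
      exact fst_image_betaSet B' f' g'
    exact_mod_cast this
  subst hBB
  have h1 : X.label B hB = Quotient.mk'' f' := by
    rw [← Quotient.out_eq' (X.label B hB)]
    exact mk_eq_of_betaSet hEq
  have h2 : Y.label B hB' = Quotient.mk'' f' := hf'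
  rw [h1, h2]

lemma restrictLabel_mk {A B : Finset I} (h : A ⊆ B) (f : {x // x ∈ B} → G) :
    restrictLabel h (Quotient.mk'' f) =
      Quotient.mk'' (fun a : {x // x ∈ A} => f ⟨a.1, h a.2⟩) := rfl

lemma lple_iff (X Y : GLabeledPartition I G) :
    LPle X Y ↔ SetRefines (toBlocks X) (toBlocks Y) := by
  constructor
  · rintro ⟨h1, h2⟩ C ⟨A, hA, f, hf, g, rfl⟩
    obtain ⟨B, hB, hAB⟩ := h1 A hA
    set F := Quotient.out (Y.label B hB) with hF
    have hlab : Y.label B hB = Quotient.mk'' F := (Quotient.out_eq' _).symm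
    have hres : X.label A hA = Quotient.mk'' (fun a : {x // x ∈ A} => F ⟨a.1, hAB a.2⟩) := by
      rw [h2 B hB A hA hAB, hlab, restrictLabel_mk]
    obtain ⟨c, hc⟩ := orbit_eq (hf.symm.trans hres)
    refine ⟨betaSet B F (g * c), ⟨B, hB, F, hlab, g * c, rfl⟩, ?_⟩
    rintro p ⟨a, rfl⟩
    exact mem_betaSet.2 ⟨hAB a.2, by rw [hc a]; group⟩
  · intro h
    have key : ∀ (A : Finset I) (hA : A ∈ X.blocks),
        ∃ (B : Finset I) (hB : B ∈ Y.blocks) (hAB : A ⊆ B),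
          X.label A hA = restrictLabel hAB (Y.label B hB) := by
      intro A hA
      set f := Quotient.out (X.label A hA) with hf
      have hlab : X.label A hA = Quotient.mk'' f := (Quotient.out_eq' _).symm
      obtain ⟨C', ⟨B, hB, F, hF, g, rfl⟩, hsub⟩ := h _ (mem_blocks_of_toBlocks hA)
      have hAB : A ⊆ B := by
        intro a ha
        have : ((a : I), f ⟨a, ha⟩) ∈ betaSet B F g := by
          refine hsub ⟨⟨a, ha⟩, by simp [hf]⟩
        exact (mem_betaSet.1 this).1
      refine ⟨B, hB, hAB, ?_⟩
      rw [hF, restrictLabel_mk, hlab]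
      refine orbit_eq' g fun a => ?_
      have hm : ((a : I), f a) ∈ betaSet B F g := by
        refine hsub ⟨a, by simp [hf]⟩
      obtain ⟨hmem, hx⟩ := mem_betaSet.1 hm
      rw [hx]
    constructor
    · intro A hA
      obtain ⟨B, hB, hAB, -⟩ := key A hA
      exact ⟨B, hB, hAB⟩
    · intro B hB A hA hAB
      obtain ⟨B', hB', hAB', hlab⟩ := key A hA
      have hBB : B' = B := by
        obtain ⟨a, ha⟩ := X.nonempty_blocks A hA
        obtain ⟨B0, -, huniq⟩ := Y.exists_unique_block a
        rw [huniq B' ⟨hB', hAB' ha⟩, huniq B ⟨hB, hAB ha⟩]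
      subst hBB
      exact hlab

section Inv
variable (Λ : Set (Set (I × G)))

noncomputable def blockAt (hΛ : IsSetPartition Λ) (p : I × G) : Set (I × G) :=
  (hΛ.2 p).choose

variable {Λ}

lemma blockAt_mem (hΛ : IsSetPartition Λ) (p : I × G) : blockAt Λ hΛ p ∈ Λ :=
  (hΛ.2 p).choose_spec.1.1

lemma mem_blockAt (hΛ : IsSetPartition Λ) (p : I × G) : p ∈ blockAt Λ hΛ p :=
  (hΛ.2 p).choose_spec.1.2

lemma blockAt_unique (hΛ : IsSetPartition Λ) {C : Set (I × G)} (hC : C ∈ Λ) {p : I × G}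
    (hp : p ∈ C) : C = blockAt Λ hΛ p :=
  (hΛ.2 p).choose_spec.2 C ⟨hC, hp⟩

lemma uniq_snd (hΛ : IsSetPartition Λ) (hG : GInvariant Λ) (hF : ActsFreelyOnBlocks Λ)
    {C : Set (I × G)} (hC : C ∈ Λ) {s : I} {x y : G} (hx : (s, x) ∈ C) (hy : (s, y) ∈ C) :
    y = x := by
  have him : (fun p : I × G => (p.1, (y * x⁻¹) * p.2)) '' C ∈ Λ := hG _ C hC
  have hy' : (s, y) ∈ (fun p : I × G => (p.1, (y * x⁻¹) * p.2)) '' C :=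
    ⟨(s, x), hx, by simp [inv_mul_cancel_right]⟩
  have hEq : (fun p : I × G => (p.1, (y * x⁻¹) * p.2)) '' C = C :=
    (blockAt_unique hΛ him hy').trans (blockAt_unique hΛ hC hy).symm
  have := hF C hC _ hEq
  rwa [mul_inv_eq_one] at this

lemma translate_block (hΛ : IsSetPartition Λ) {C C' : Set (I × G)} (hC : C ∈ Λ) (hC' : C' ∈ Λ)
    (hG : GInvariant Λ) {s : I} {x y : G} (hx : (s, x) ∈ C) (hy : (s, y) ∈ C') :
    C' = (fun p : I × G => (p.1, (y * x⁻¹) * p.2)) '' C := by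
  have him : (fun p : I × G => (p.1, (y * x⁻¹) * p.2)) '' C ∈ Λ := hG _ C hC
  have hy' : (s, y) ∈ (fun p : I × G => (p.1, (y * x⁻¹) * p.2)) '' C :=
    ⟨(s, x), hx, by simp [inv_mul_cancel_right]⟩
  exact (blockAt_unique hΛ hC' hy).trans (blockAt_unique hΛ him hy').symm

lemma fst_image_shift (g : G) (C : Set (I × G)) :
    Prod.fst '' ((fun p : I × G => (p.1, g * p.2)) '' C) = Prod.fst '' C := by
  rw [← Set.image_comp]; rfl

variable (Λ)

noncomputable def chosenC {B : Finset I} (hB : ∃ C ∈ Λ, Prod.fst '' C = ↑B) : Set (I × G) :=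
  hB.choose

variable {Λ}

lemma chosenC_mem {B : Finset I} (hB : ∃ C ∈ Λ, Prod.fst '' C = ↑B) : chosenC Λ hB ∈ Λ :=
  hB.choose_spec.1

lemma chosenC_fst {B : Finset I} (hB : ∃ C ∈ Λ, Prod.fst '' C = ↑B) :
    Prod.fst '' chosenC Λ hB = ↑B := hB.choose_spec.2

lemma exists_snd {B : Finset I} (hB : ∃ C ∈ Λ, Prod.fst '' C = ↑B) (b : {x // x ∈ B}) :
    ∃ x, ((b : I), x) ∈ chosenC Λ hB := by
  have : (b : I) ∈ Prod.fst '' chosenC Λ hB := (chosenC_fst hB).symm ▸ b.2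
  obtain ⟨⟨s, x⟩, hp, he⟩ := this
  exact ⟨x, by rwa [← he]⟩

variable (Λ)

noncomputable def labelFun {B : Finset I} (hB : ∃ C ∈ Λ, Prod.fst '' C = ↑B) :
    {x // x ∈ B} → G := fun b => (exists_snd hB b).choose

variable {Λ}

lemma labelFun_mem {B : Finset I} (hB : ∃ C ∈ Λ, Prod.fst '' C = ↑B) (b : {x // x ∈ B}) :
    ((b : I), labelFun Λ hB b) ∈ chosenC Λ hB := (exists_snd hB b).choose_spec

lemma chosenC_eq_beta (hΛ : IsSetPartition Λ) (hG : GInvariant Λ) (hF : ActsFreelyOnBlocks Λ)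
    {B : Finset I} (hB : ∃ C ∈ Λ, Prod.fst '' C = ↑B) :
    chosenC Λ hB = betaSet B (labelFun Λ hB) 1 := by
  ext ⟨s, x⟩
  constructor
  · intro h
    have hs : s ∈ B := by
      have : s ∈ Prod.fst '' chosenC Λ hB := ⟨(s, x), h, rfl⟩
      rwa [chosenC_fst hB] at this
    have hx : x = labelFun Λ hB ⟨s, hs⟩ :=
      uniq_snd hΛ hG hF (chosenC_mem hB) h (labelFun_mem hB ⟨s, hs⟩) |>.symm
    exact mem_betaSet.2 ⟨hs, by rw [one_mul, hx]⟩
  · intro h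
    obtain ⟨hs, hx⟩ := mem_betaSet.1 h
    rw [hx, one_mul]
    exact labelFun_mem hB ⟨s, hs⟩

variable (Λ)

noncomputable def invPart (hΛ : IsSetPartition Λ) (hG : GInvariant Λ)
    (hF : ActsFreelyOnBlocks Λ) : GLabeledPartition I G where
  blocks := Finset.univ.filter fun B : Finset I => ∃ C ∈ Λ, Prod.fst '' C = ↑B
  nonempty_blocks := by
    intro B hB
    obtain ⟨C, hC, hfst⟩ := (Finset.mem_filter.1 hB).2
    obtain ⟨p, hp⟩ := hΛ.1 C hC
    have : p.1 ∈ (↑B : Set I) := hfst ▸ ⟨p, hp, rfl⟩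
    exact ⟨p.1, this⟩
  exists_unique_block := by
    intro x
    set C := blockAt Λ hΛ (x, 1) with hCdef
    have hC : C ∈ Λ := blockAt_mem hΛ (x, 1)
    set B := (Set.toFinite (Prod.fst '' C)).toFinset with hBdef
    have hcoe : (↑B : Set I) = Prod.fst '' C := Set.Finite.coe_toFinset _
    refine ⟨B, ⟨Finset.mem_filter.2 ⟨Finset.mem_univ _, C, hC, hcoe.symm⟩, ?_⟩, ?_⟩
    · have : x ∈ Prod.fst '' C := ⟨(x, 1), mem_blockAt hΛ (x, 1), rfl⟩
      rwa [← hcoe] at this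
    · rintro B' ⟨hB', hxB'⟩
      obtain ⟨C', hC', hfst'⟩ := (Finset.mem_filter.1 hB').2
      have hx' : x ∈ Prod.fst '' C' := hfst'.symm ▸ hxB'
      obtain ⟨⟨x0, z⟩, hz, he⟩ := hx'
      have hz' : (x, z) ∈ C' := he ▸ hz
      have htr : C' = (fun p : I × G => (p.1, (z * 1⁻¹) * p.2)) '' C :=
        translate_block hΛ hC hC' hG (mem_blockAt hΛ (x, 1)) hz'
      apply Finset.coe_injective
      rw [← hfst', htr, fst_image_shift, hcoe]
  label B hB := Quotient.mk'' (labelFun Λ (Finset.mem_filter.1 hB).2)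

lemma toBlocks_invPart (Λ : Set (Set (I × G))) (hΛ : IsSetPartition Λ) (hG : GInvariant Λ)
    (hF : ActsFreelyOnBlocks Λ) : toBlocks (invPart Λ hΛ hG hF) = Λ := by
  apply Set.eq_of_subset_of_subset
  · rintro C₀ ⟨B, hB, f, hf, g, rfl⟩
    set hB2 := (Finset.mem_filter.1 hB).2 with hB2def
    have hlab : (invPart Λ hΛ hG hF).label B hB = Quotient.mk'' (labelFun Λ hB2) := rfl
    obtain ⟨c, hc⟩ := orbit_eq (hf.symm.trans hlab)
    have h1 : betaSet B f g = betaSet B (labelFun Λ hB2) (g * c) := betaSet_congr hc rfl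
    have h2 : (fun p : I × G => (p.1, (g * c) * p.2)) '' chosenC Λ hB2 ∈ Λ :=
      hG _ _ (chosenC_mem hB2)
    have h3 : (fun p : I × G => (p.1, (g * c) * p.2)) '' chosenC Λ hB2
        = betaSet B (labelFun Λ hB2) (g * c) := by
      rw [chosenC_eq_beta hΛ hG hF hB2, shift_betaSet, mul_one]
    show betaSet B f g ∈ Λ
    rw [h1, ← h3]
    exact h2
  · intro C hC
    set B := (Set.toFinite (Prod.fst '' C)).toFinset with hBdef
    have hcoe : (↑B : Set I) = Prod.fst '' C := Set.Finite.coe_toFinset _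
    have hB2 : ∃ C' ∈ Λ, Prod.fst '' C' = ↑B := ⟨C, hC, hcoe.symm⟩
    have hB : B ∈ (invPart Λ hΛ hG hF).blocks := Finset.mem_filter.2 ⟨Finset.mem_univ _, hB2⟩
    set hB2' := (Finset.mem_filter.1 hB).2 with hB2'def
    obtain ⟨⟨s, x⟩, hsx⟩ := hΛ.1 C hC
    have hs : s ∈ Prod.fst '' chosenC Λ hB2' := by
      rw [chosenC_fst hB2', hcoe]; exact ⟨(s, x), hsx, rfl⟩
    obtain ⟨⟨s0, y⟩, hy, he⟩ := hs
    have hy' : (s, y) ∈ chosenC Λ hB2' := he ▸ hy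
    have htr : C = (fun p : I × G => (p.1, (x * y⁻¹) * p.2)) '' chosenC Λ hB2' :=
      translate_block hΛ (chosenC_mem hB2') hC hG hy' hsx
    have hCeq : C = betaSet B (labelFun Λ hB2') (x * y⁻¹) := by
      rw [htr, chosenC_eq_beta hΛ hG hF hB2', shift_betaSet, mul_one]
    exact ⟨B, hB, labelFun Λ hB2', rfl, x * y⁻¹, hCeq⟩

end Inv
end Aux


/-- There is an order-preserving bijection between the `G`-labeled set partitions of a
finite set `I` and the partitions of `I × G` on whose blocks `G` acts freely (ordered
by refinement), sending `X` to the partition with blocks `{g · β_{B,f}}`. -/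
theorem stmt11 (I : Type) [Fintype I] [DecidableEq I] (G : Type) [Group G] :
    ∃ e : GLabeledPartition I G ≃
        {Λ : Set (Set (I × G)) //
          IsSetPartition Λ ∧ GInvariant Λ ∧ ActsFreelyOnBlocks Λ},
      (∀ X Y : GLabeledPartition I G, LPle X Y ↔ SetRefines (e X).1 (e Y).1) ∧
      ∀ X : GLabeledPartition I G, (e X).1 = toBlocks X := by
  have hbij : Function.Bijective (fun X : GLabeledPartition I G =>
      (⟨toBlocks X, toBlocks_isSetPartition X, toBlocks_gInvariant X, toBlocks_free X⟩ :
        {Λ : Set (Set (I × G)) //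
          IsSetPartition Λ ∧ GInvariant Λ ∧ ActsFreelyOnBlocks Λ})) := by
    constructor
    · intro X Y h
      exact toBlocks_injective (congrArg Subtype.val h)
    · rintro ⟨Λ, h1, h2, h3⟩
      exact ⟨invPart Λ h1 h2 h3, Subtype.ext (toBlocks_invPart Λ h1 h2 h3)⟩
  refine ⟨Equiv.ofBijective _ hbij, fun X Y => ?_, fun X => rfl⟩
  exact lple_iff X Y
end

section
/- The number of G-labeled set partitions of [n] with blocks labeled by G-orbits of maps to a finite group G equals the number of partitions of [n] whose arcs are labeled by elements of G; in particular, for a partition with k blocks there are |G|^(n-k) arc labelings. -/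
open Finset
open scoped Classical

/-- `Λ` is a set partition of the finite set `S`. -/
def IsPartitionOn {I : Type*} [DecidableEq I] (S : Finset I) (Λ : Finset (Finset I)) : Prop :=
  (∀ B ∈ Λ, B.Nonempty) ∧ (∀ B ∈ Λ, B ⊆ S) ∧ ∀ x ∈ S, ∃! B, B ∈ Λ ∧ x ∈ B

/-- `(i,j)` is an arc of the set partition `Λ` of `[n]`: `i < j`, both lie in a common
block `B`, and no element of `B` lies strictly between them. -/
def IsArc {n : ℕ} (Λ : Finset (Finset (Fin n))) (a : Fin n × Fin n) : Prop :=
  a.1 < a.2 ∧ ∃ B ∈ Λ, a.1 ∈ B ∧ a.2 ∈ B ∧ ∀ k ∈ B, k ≤ a.1 ∨ a.2 ≤ k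

section A
variable {n : ℕ}

lemma sum_card_eq (Λ : Finset (Finset (Fin n))) (hΛ : IsPartitionOn Finset.univ Λ) :
    ∑ B ∈ Λ, B.card = n := by
  have hdisj : ∀ B ∈ Λ, ∀ B' ∈ Λ, B ≠ B' → Disjoint B B' := by
    intro B hB B' hB' hne
    rw [Finset.disjoint_left]
    intro x hxB hxB'
    obtain ⟨C, _, hC⟩ := hΛ.2.2 x (mem_univ x)
    exact hne ((hC B ⟨hB, hxB⟩).trans (hC B' ⟨hB', hxB'⟩).symm)
  have hu : Λ.biUnion id = Finset.univ := by
    ext x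
    simp only [mem_biUnion, id, mem_univ, iff_true]
    obtain ⟨B, hB, _⟩ := hΛ.2.2 x (mem_univ x)
    exact ⟨B, hB.1, hB.2⟩
  calc ∑ B ∈ Λ, B.card = (Λ.biUnion id).card := (Finset.card_biUnion hdisj).symm
    _ = n := by rw [hu]; simp

lemma sum_card_sub_one (Λ : Finset (Finset (Fin n))) (hΛ : IsPartitionOn Finset.univ Λ) :
    ∑ B ∈ Λ, (B.card - 1) = n - Λ.card := by
  have h1 : ∀ B ∈ Λ, 1 ≤ B.card := fun B hB => card_pos.mpr (hΛ.1 B hB)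
  have hs := sum_card_eq Λ hΛ
  have h2 : ∑ B ∈ Λ, B.card = ∑ B ∈ Λ, ((B.card - 1) + 1) := by
    refine Finset.sum_congr rfl fun B hB => ?_
    exact (Nat.sub_add_cancel (h1 B hB)).symm
  rw [h2, Finset.sum_add_distrib, Finset.sum_const, smul_eq_mul, mul_one] at hs
  omega

lemma card_arcs (Λ : Finset (Finset (Fin n))) (hΛ : IsPartitionOn Finset.univ Λ) :
    Nat.card {a : Fin n × Fin n // IsArc Λ a} = n - Λ.card := by
  classical
  have hfil : ∀ (B : Finset (Fin n)) (hB : B ∈ Λ) (j : Fin n), j ∈ B →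
      j ≠ B.min' (hΛ.1 B hB) → (B.filter (fun x => x < j)).Nonempty := by
    intro B hB j hj hne
    refine ⟨B.min' (hΛ.1 B hB), mem_filter.mpr ⟨min'_mem _ _, ?_⟩⟩
    exact lt_of_le_of_ne (min'_le _ _ hj) hne.symm
  let f : (Σ B : {B // B ∈ Λ}, {x : Fin n // x ∈ B.1 ∧ x ≠ B.1.min' (hΛ.1 B.1 B.2)}) →
      {a : Fin n × Fin n // IsArc Λ a} := fun p =>
    ⟨((p.1.1.filter (fun x => x < p.2.1)).max' (hfil p.1.1 p.1.2 p.2.1 p.2.2.1 p.2.2.2), p.2.1), by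
      obtain ⟨⟨B, hB⟩, ⟨j, hj, hjm⟩⟩ := p
      dsimp only
      have hmax := Finset.max'_mem (B.filter (fun x => x < j)) (hfil B hB j hj hjm)
      rw [mem_filter] at hmax
      refine ⟨hmax.2, B, hB, hmax.1, hj, ?_⟩
      intro k hk
      by_cases hkj : k < j
      · exact Or.inl (Finset.le_max' (B.filter (fun x => x < j)) k (mem_filter.mpr ⟨hk, hkj⟩))
      · exact Or.inr (le_of_not_gt hkj)⟩
  have hbij : Function.Bijective f := by
    constructor
    · rintro ⟨⟨B, hB⟩, ⟨j, hj, hjm⟩⟩ ⟨⟨B', hB'⟩, ⟨j', hj', hjm'⟩⟩ h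
      have hjj : j = j' := congrArg (fun a => a.1.2) h
      subst hjj
      have hBB : B = B' := by
        obtain ⟨C, _, hC⟩ := hΛ.2.2 j (mem_univ j)
        exact (hC B ⟨hB, hj⟩).trans (hC B' ⟨hB', hj'⟩).symm
      subst hBB
      rfl
    · rintro ⟨⟨i, j⟩, hlt, B, hB, hiB, hjB, harc⟩
      have hjm : j ≠ B.min' (hΛ.1 B hB) := by
        intro h
        have h2 := Finset.min'_le B i hiB
        rw [← h] at h2
        exact absurd hlt (not_lt.mpr h2)
      refine ⟨⟨⟨B, hB⟩, ⟨j, hjB, hjm⟩⟩, ?_⟩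
      have h1 : i ≤ (B.filter (fun x => x < j)).max' (hfil B hB j hjB hjm) :=
        Finset.le_max' (B.filter (fun x => x < j)) i (mem_filter.mpr ⟨hiB, hlt⟩)
      have h2 := Finset.max'_mem (B.filter (fun x => x < j)) (hfil B hB j hjB hjm)
      rw [mem_filter] at h2
      have h3 : (B.filter (fun x => x < j)).max' (hfil B hB j hjB hjm) ≤ i := by
        rcases harc _ h2.1 with h | h
        · exact h
        · exact absurd h2.2 (not_lt.mpr h)
      exact Subtype.ext (Prod.ext (le_antisymm h3 h1) rfl)
  rw [← Nat.card_eq_of_bijective f hbij]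
  rw [Nat.card_eq_fintype_card, Fintype.card_sigma]
  have hfib : ∀ B : {B // B ∈ Λ},
      Fintype.card {x : Fin n // x ∈ B.1 ∧ x ≠ B.1.min' (hΛ.1 B.1 B.2)} = B.1.card - 1 := by
    rintro ⟨B, hB⟩
    rw [Fintype.card_subtype]
    have he : univ.filter (fun x => x ∈ B ∧ x ≠ B.min' (hΛ.1 B hB))
        = B.erase (B.min' (hΛ.1 B hB)) := by
      ext x; simp [mem_erase, and_comm]
    rw [he, card_erase_of_mem (min'_mem _ _)]
  calc ∑ B : {B // B ∈ Λ}, Fintype.card {x : Fin n // x ∈ B.1 ∧ x ≠ B.1.min' (hΛ.1 B.1 B.2)}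
      = ∑ B : {B // B ∈ Λ}, (B.1.card - 1) := Finset.sum_congr rfl fun B _ => hfib B
    _ = ∑ B ∈ Λ, (B.card - 1) := Finset.sum_coe_sort Λ (fun B => B.card - 1)
    _ = n - Λ.card := sum_card_sub_one Λ hΛ
end A

section B
variable {n : ℕ} {G : Type} [Group G] [Fintype G]

noncomputable def orbitEquiv (B : Finset (Fin n)) (hB : B.Nonempty) :
    MulAction.orbitRel.Quotient G ({x // x ∈ B} → G) ≃
      ({b : {x // x ∈ B} // b ≠ (⟨hB.choose, hB.choose_spec⟩ : {x // x ∈ B})} → G) where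
  toFun := Quotient.lift
    (fun f (b : {b : {x // x ∈ B} // b ≠ (⟨hB.choose, hB.choose_spec⟩ : {x // x ∈ B})}) =>
      (f ⟨hB.choose, hB.choose_spec⟩)⁻¹ * f b.1)
    (by
      intro f g hfg
      obtain ⟨c, rfl⟩ := hfg
      funext b
      simp [mul_assoc])
  invFun v := Quotient.mk (MulAction.orbitRel G ({x // x ∈ B} → G))
    (fun b => if h : b = (⟨hB.choose, hB.choose_spec⟩ : {x // x ∈ B}) then 1 else v ⟨b, h⟩)
  left_inv := by
    intro q
    induction q using Quotient.inductionOn' with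
    | h f =>
      apply Quotient.sound
      refine ⟨(f ⟨hB.choose, hB.choose_spec⟩)⁻¹, ?_⟩
      funext b
      by_cases h : b = (⟨hB.choose, hB.choose_spec⟩ : {x // x ∈ B}) <;>
        simp [h]
  right_inv := by
    intro v
    funext b
    show (_ : G)⁻¹ * _ = v b
    simp [b.2]

lemma card_orbitQuotient (B : Finset (Fin n)) (hB : B.Nonempty) :
    Nat.card (MulAction.orbitRel.Quotient G ({x // x ∈ B} → G))
      = Fintype.card G ^ (B.card - 1) := by
  rw [Nat.card_congr (orbitEquiv (G := G) B hB), Nat.card_fun, Nat.card_eq_fintype_card,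
    Nat.card_eq_fintype_card]
  congr 1
  have : Fintype.card {b : {x // x ∈ B} // b ≠ (⟨hB.choose, hB.choose_spec⟩ : {x // x ∈ B})}
      = Fintype.card {x // x ∈ B} - 1 := by
    simp [Fintype.card_subtype_compl, Fintype.card_subtype_eq]
  rw [this, Fintype.card_coe]

noncomputable def glpEquiv :
    GLabeledPartition (Fin n) G ≃
      (Λ : {Λ : Finset (Finset (Fin n)) // IsPartitionOn Finset.univ Λ}) ×
        ((B : {B // B ∈ Λ.1}) → MulAction.orbitRel.Quotient G ({x // x ∈ B.1} → G)) where
  toFun P := ⟨⟨P.blocks, P.nonempty_blocks, fun B _ => Finset.subset_univ B,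
      fun x _ => P.exists_unique_block x⟩, fun B => P.label B.1 B.2⟩
  invFun q := ⟨q.1.1, q.1.2.1, fun x => q.1.2.2.2 x (mem_univ x), fun B hB => q.2 ⟨B, hB⟩⟩
  left_inv P := rfl
  right_inv q := rfl

end B


/-- The number of `G`-labeled set partitions of `[n]` equals the number of set
partitions of `[n]` whose arcs are labeled by elements of `G`; in particular a
partition with `k` blocks has `|G|^(n-k)` arc labelings. -/
theorem stmt12 (n : ℕ) (G : Type) [Group G] [Fintype G] :
    Nat.card (GLabeledPartition (Fin n) G)
      = Nat.card ((Λ : {Λ : Finset (Finset (Fin n)) // IsPartitionOn Finset.univ Λ}) ×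
          ({ a : Fin n × Fin n // IsArc Λ.1 a } → G)) ∧
    ∀ Λ : Finset (Finset (Fin n)), IsPartitionOn Finset.univ Λ →
      Nat.card ({ a : Fin n × Fin n // IsArc Λ a } → G)
        = Fintype.card G ^ (n - Λ.card) := by
  constructor
  · rw [Nat.card_congr (glpEquiv (n := n) (G := G))]
    rw [Nat.card_eq_fintype_card, Nat.card_eq_fintype_card, Fintype.card_sigma,
      Fintype.card_sigma]
    refine Finset.sum_congr rfl fun Λ _ => ?_
    rw [Fintype.card_pi, Fintype.card_fun]
    have ha : Fintype.card {a : Fin n × Fin n // IsArc Λ.1 a} = n - Λ.1.card := by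
      rw [← Nat.card_eq_fintype_card]; exact card_arcs Λ.1 Λ.2
    rw [ha]
    calc ∏ B : {B // B ∈ Λ.1},
          Fintype.card (MulAction.orbitRel.Quotient G ({x // x ∈ B.1} → G))
        = ∏ B : {B // B ∈ Λ.1}, Fintype.card G ^ (B.1.card - 1) := by
          refine Finset.prod_congr rfl fun B _ => ?_
          rw [← Nat.card_eq_fintype_card]
          exact card_orbitQuotient B.1 (Λ.2.1 B.1 B.2)
      _ = ∏ B ∈ Λ.1, Fintype.card G ^ (B.card - 1) :=
          Finset.prod_coe_sort Λ.1 (fun B => Fintype.card G ^ (B.card - 1))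
      _ = Fintype.card G ^ ∑ B ∈ Λ.1, (B.card - 1) := by
          rw [← Finset.prod_pow_eq_pow_sum]
      _ = Fintype.card G ^ (n - Λ.1.card) := by rw [sum_card_sub_one Λ.1 Λ.2]
  · intro Λ hΛ
    rw [Nat.card_fun, Nat.card_eq_fintype_card, card_arcs Λ hΛ]
end
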